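/- arXiv:1808.08697 — 3 statements merged into one kernel-verified Lean document; each statement's English description precedes it below -/
import Mathlib

section
/- Let A be a finite type with |A| ≥ 2. The subgroup of Aut(A^ℤ) generated by the shift σ_A together with all symbol permutations π̄ (for π a permutation of A) is isomorphic, as a group, to ℤ × Perm A. (When |A| is prime, this subgroup is the group PAut(|A|), so in particular PAut(n) ≅ ℤ × Sₙ for every prime n.) -/
open Function

/-- The shift map on `ℤ → A`. -/
def shiftMap (A : Type*) : (ℤ → A) → (ℤ → A) := fun x i => x (i + 1)

/-- The shift map as a permutation of `ℤ → A`. -/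
def shiftPerm (A : Type*) : Equiv.Perm (ℤ → A) where
  toFun := shiftMap A
  invFun x i := x (i - 1)
  left_inv x := funext fun i => by simp [shiftMap]
  right_inv x := funext fun i => by simp [shiftMap]

/-- Finite types carry the discrete topology. -/
instance fintypeDiscreteTopology (A : Type*) [Fintype A] : TopologicalSpace A := ⊥

/-- The automorphism group of the full shift `A^ℤ`: shift-commuting self-homeomorphisms of
`ℤ → A`, as a subgroup of the permutation group of `ℤ → A`. -/
def FullShiftAut (A : Type*) [Fintype A] : Subgroup (Equiv.Perm (ℤ → A)) where
  carrier := { f | Continuous ⇑f ∧ Continuous ⇑f.symm ∧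
      ∀ x, f (shiftMap A x) = shiftMap A (f x) }
  one_mem' := ⟨continuous_id, continuous_id, fun _ => rfl⟩
  mul_mem' := by
    rintro f g ⟨hf1, hf2, hf3⟩ ⟨hg1, hg2, hg3⟩
    refine ⟨?_, ?_, fun x => ?_⟩
    · exact hf1.comp hg1
    · exact hg2.comp hf2
    · show f (g (shiftMap A x)) = shiftMap A (f (g x))
      rw [hg3, hf3]
  inv_mem' := by
    rintro f ⟨hf1, hf2, hf3⟩
    refine ⟨hf2, hf1, fun x => ?_⟩
    apply f.injective
    rw [show f (f⁻¹ (shiftMap A x)) = shiftMap A x from f.apply_symm_apply _, hf3,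
      show f (f⁻¹ x) = x from f.apply_symm_apply x]

/-- The symbol permutation determined by a permutation of the alphabet. -/
def symbolPerm {A : Type*} (π : Equiv.Perm A) : Equiv.Perm (ℤ → A) :=
  Equiv.piCongrRight fun _ => π

/-- The partial shift on the first track. -/
def partialShift₁ (B C : Type*) : Equiv.Perm (ℤ → B × C) where
  toFun x i := ((x (i + 1)).1, (x i).2)
  invFun x i := ((x (i - 1)).1, (x i).2)
  left_inv x := funext fun i => by simp
  right_inv x := funext fun i => by simp

/-- The partial shift on the second track. -/
def partialShift₂ (B C : Type*) : Equiv.Perm (ℤ → B × C) where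
  toFun x i := ((x i).1, (x (i + 1)).2)
  invFun x i := ((x i).1, (x (i - 1)).2)
  left_inv x := funext fun i => by simp
  right_inv x := funext fun i => by simp

/-- `PAut[B;C]`: the subgroup of the automorphism group of `(B × C)^ℤ` generated by the two
partial shifts and all symbol permutations. -/
def PAut (B C : Type*) : Subgroup (Equiv.Perm (ℤ → B × C)) :=
  Subgroup.closure
    ({partialShift₁ B C, partialShift₂ B C} ∪ Set.range (symbolPerm (A := B × C)))

lemma shiftPerm_zpow_apply (A : Type*) (n : ℤ) (x : ℤ → A) (i : ℤ) :
    (shiftPerm A ^ n) x i = x (i + n) := by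
  induction n using Int.induction_on generalizing x i with
  | zero => simp
  | succ n ih =>
    have : shiftPerm A ^ ((n : ℤ) + 1) = shiftPerm A ^ (n : ℤ) * shiftPerm A :=
      zpow_add_one _ _
    rw [this]
    show (shiftPerm A ^ (n : ℤ)) (shiftPerm A x) i = _
    rw [ih]
    show x (i + n + 1) = x (i + (n + 1))
    ring_nf
  | pred n ih =>
    have : shiftPerm A ^ (-(n : ℤ) - 1) = shiftPerm A ^ (-(n : ℤ)) * (shiftPerm A)⁻¹ :=
      zpow_sub_one _ _
    rw [this]
    show (shiftPerm A ^ (-(n : ℤ))) ((shiftPerm A)⁻¹ x) i = _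
    rw [ih]
    show x (i + -(n : ℤ) - 1) = x (i + (-(n : ℤ) - 1))
    ring_nf

lemma symbolPerm_apply {A : Type*} (π : Equiv.Perm A) (x : ℤ → A) (i : ℤ) :
    symbolPerm π x i = π (x i) := rfl

lemma shiftPerm_comm_symbolPerm {A : Type*} (π : Equiv.Perm A) :
    Commute (shiftPerm A) (symbolPerm π) := by
  apply Equiv.ext; intro x; funext i; rfl

lemma symbolPerm_mul {A : Type*} (π ρ : Equiv.Perm A) :
    symbolPerm (π * ρ) = symbolPerm π * symbolPerm ρ := by
  apply Equiv.ext; intro x; funext i; rfl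

/-- The homomorphism `ℤ × Perm A →* Perm (ℤ → A)`. -/
noncomputable def stmt2Hom (A : Type) :
    Multiplicative ℤ × Equiv.Perm A →* Equiv.Perm (ℤ → A) where
  toFun p := shiftPerm A ^ (Multiplicative.toAdd p.1) * symbolPerm p.2
  map_one' := by
    simp only [Prod.fst_one, Prod.snd_one, toAdd_one, zpow_zero, one_mul]
    apply Equiv.ext; intro x; funext i; rfl
  map_mul' p q := by
    simp only [Prod.fst_mul, Prod.snd_mul, toAdd_mul, zpow_add, symbolPerm_mul]
    have h : Commute (shiftPerm A ^ (Multiplicative.toAdd q.1)) (symbolPerm p.2) :=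
      (shiftPerm_comm_symbolPerm p.2).zpow_left _
    rw [mul_assoc, mul_assoc, ← mul_assoc (shiftPerm A ^ (Multiplicative.toAdd q.1)),
      h.eq, mul_assoc]

lemma stmt2Hom_injective (A : Type) [Fintype A] (hA : 2 ≤ Fintype.card A) :
    Function.Injective (stmt2Hom A) := by
  rw [injective_iff_map_eq_one]
  rintro ⟨n, π⟩ h
  have key : ∀ (x : ℤ → A) (i : ℤ), π (x (i + Multiplicative.toAdd n)) = x i := by
    intro x i
    have := congrFun (congrArg (fun (f : Equiv.Perm (ℤ → A)) => f x) h) i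
    simpa [stmt2Hom, shiftPerm_zpow_apply, symbolPerm_apply] using this
  have hπ : π = 1 := by
    apply Equiv.ext; intro a
    simpa using key (fun _ => a) 0
  obtain ⟨a, b, hab⟩ := Fintype.one_lt_card_iff.mp (show 1 < Fintype.card A by omega)
  have hn : Multiplicative.toAdd n = 0 := by
    by_contra hne
    have := key (fun j => if j = 0 then a else b) 0
    rw [hπ] at this
    simp only [Equiv.Perm.coe_one, id_eq, zero_add, if_pos rfl, if_neg hne] at this
    exact hab this.symm
  refine Prod.ext ?_ hπ
  exact Multiplicative.toAdd.injective hn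

lemma stmt2Hom_range (A : Type) [Fintype A] :
    (stmt2Hom A).range =
      Subgroup.closure ({shiftPerm A} ∪ Set.range (symbolPerm (A := A))) := by
  apply le_antisymm
  · rintro f ⟨⟨n, π⟩, rfl⟩
    apply mul_mem
    · exact Subgroup.zpow_mem _ (Subgroup.subset_closure (Set.mem_union_left _ (Set.mem_singleton _))) _
    · exact Subgroup.subset_closure (Or.inr ⟨π, rfl⟩)
  · rw [Subgroup.closure_le]
    rintro f (rfl | ⟨π, rfl⟩)
    · refine ⟨(Multiplicative.ofAdd 1, 1), ?_⟩
      show shiftPerm A ^ (1 : ℤ) * symbolPerm 1 = shiftPerm A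
      have h1 : symbolPerm (1 : Equiv.Perm A) = 1 := by
        apply Equiv.ext; intro x; funext i; rfl
      rw [h1, zpow_one, mul_one]
    · refine ⟨(Multiplicative.ofAdd 0, π), ?_⟩
      show shiftPerm A ^ (0 : ℤ) * symbolPerm π = symbolPerm π
      rw [zpow_zero, one_mul]

/-- the subgroup of `Aut(A^ℤ)` generated by the shift and the symbol permutations
is isomorphic to `ℤ × Perm A`. -/
theorem stmt2 (A : Type) [Fintype A] (hA : 2 ≤ Fintype.card A) :
    Nonempty
      (↥(Subgroup.closure ({shiftPerm A} ∪ Set.range (symbolPerm (A := A)))) ≃*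
        Multiplicative ℤ × Equiv.Perm A) := by
  exact ⟨((MulEquiv.subgroupCongr (stmt2Hom_range A)).symm.trans
    (MonoidHom.ofInjective (stmt2Hom_injective A hA)).symm)⟩
end

section
/- Let F be a field, let p be a prime with ringChar F ≠ p, let d, k ∈ ℕ, and let G be a subgroup of GL(Fin d, F) such that g^(p^k) = 1 for every g ∈ G. Then G is finite. -/
open Module Matrix Polynomial

section Part1


section Density

variable {E V : Type} [Field E] [AddCommGroup V] [Module E V]

lemma orbit_top (A : Subalgebra E (Module.End E V))
    (hirr : ∀ W : Submodule E V, (∀ a ∈ A, ∀ x ∈ W, a x ∈ W) → W = ⊥ ∨ W = ⊤)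
    {x : V} (hx : x ≠ 0) (y : V) : ∃ a ∈ A, a x = y := by
  let W : Submodule E V :=
    { carrier := {z | ∃ a ∈ A, a x = z}
      add_mem' := by rintro u v ⟨a, ha, rfl⟩ ⟨b, hb, rfl⟩
                     exact ⟨a + b, A.add_mem ha hb, rfl⟩
      zero_mem' := ⟨0, A.zero_mem, rfl⟩
      smul_mem' := by rintro c u ⟨a, ha, rfl⟩
                      exact ⟨c • a, A.smul_mem ha c, rfl⟩ }
  have hinv : ∀ a ∈ A, ∀ z ∈ W, a z ∈ W := by
    rintro b hb z ⟨a, ha, rfl⟩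
    exact ⟨b * a, A.mul_mem hb ha, rfl⟩
  rcases hirr W hinv with h | h
  · exfalso
    have hxW : x ∈ W := ⟨1, A.one_mem, rfl⟩
    rw [h] at hxW
    exact hx (Submodule.mem_bot E |>.mp hxW)
  · have : y ∈ W := h ▸ Submodule.mem_top
    exact this

lemma schur_scalar [IsAlgClosed E] [FiniteDimensional E V] [Nontrivial V]
    (A : Subalgebra E (Module.End E V))
    (hirr : ∀ W : Submodule E V, (∀ a ∈ A, ∀ x ∈ W, a x ∈ W) → W = ⊥ ∨ W = ⊤)
    (φ : Module.End E V) (hφ : ∀ a ∈ A, φ * a = a * φ) :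
    ∃ μ : E, φ = μ • (1 : Module.End E V) := by
  obtain ⟨μ, hμ⟩ := Module.End.exists_eigenvalue φ
  refine ⟨μ, ?_⟩
  have h1 : ∀ a ∈ A, ∀ x ∈ Module.End.eigenspace φ μ, a x ∈ Module.End.eigenspace φ μ := by
    intro a ha x hx
    rw [Module.End.mem_eigenspace_iff] at hx ⊢
    calc φ (a x) = (φ * a) x := rfl
    _ = (a * φ) x := by rw [hφ a ha]
    _ = a (φ x) := rfl
    _ = a (μ • x) := by rw [hx]
    _ = μ • a x := map_smul a μ x
  rcases hirr _ h1 with h | h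
  · exact absurd h (Module.End.hasEigenvalue_iff.mp hμ |> fun h' => h')
  · ext x
    have hx : x ∈ Module.End.eigenspace φ μ := h ▸ Submodule.mem_top
    rw [Module.End.mem_eigenspace_iff] at hx
    simpa using hx

end Density

end Part1

section Part2


variable {E V : Type} [Field E] [AddCommGroup V] [Module E V]

lemma density [IsAlgClosed E] [FiniteDimensional E V]
    (A : Subalgebra E (Module.End E V))
    (hirr : ∀ W : Submodule E V, (∀ a ∈ A, ∀ x ∈ W, a x ∈ W) → W = ⊥ ∨ W = ⊤) :
    ∀ (n : ℕ) (v : Fin n → V), LinearIndependent E v → ∀ w : Fin n → V,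
      ∃ a ∈ A, ∀ i, a (v i) = w i := by
  intro n
  induction n with
  | zero => exact fun v _ w => ⟨1, A.one_mem, fun i => i.elim0⟩
  | succ n IH =>
    -- separation at the last position
    have sep : ∀ (v : Fin (n+1) → V), LinearIndependent E v →
        ∃ a ∈ A, (∀ i : Fin n, a (v i.castSucc) = 0) ∧ a (v (Fin.last n)) ≠ 0 := by
      intro v hv
      by_contra hcon
      push_neg at hcon
      have hvlast : v (Fin.last n) ≠ 0 := hv.ne_zero _
      have : Nontrivial V := nontrivial_of_ne _ _ hvlast
      have hvinit : LinearIndependent E (fun i : Fin n => v i.castSucc) :=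
        hv.comp Fin.castSucc (Fin.castSucc_injective n)
      -- the linear map recording the action on the tuple
      let L : Module.End E V →ₗ[E] (Fin n → V) × V :=
        { toFun := fun a => (fun i => a (v i.castSucc), a (v (Fin.last n)))
          map_add' := fun a b => by
            refine Prod.ext (funext fun i => ?_) ?_ <;> simp
          map_smul' := fun c a => by
            refine Prod.ext (funext fun i => ?_) ?_ <;> simp }
      let M : Submodule E ((Fin n → V) × V) := (Subalgebra.toSubmodule A).map L
      let π : M →ₗ[E] (Fin n → V) := (LinearMap.fst E _ _).comp M.subtype
      have hπinj : Function.Injective π := by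
        rw [← LinearMap.ker_eq_bot]
        rw [Submodule.eq_bot_iff]
        rintro ⟨m, hm⟩ hker
        obtain ⟨a, ha, rfl⟩ := hm
        have h1 : (fun (i : Fin n) => a (v i.castSucc)) = 0 := hker
        have h2 : a (v (Fin.last n)) = 0 :=
          hcon a ha (fun i => congrFun h1 i)
        refine Subtype.ext ?_
        show L a = 0
        refine Prod.ext h1 h2
      have hπsurj : Function.Surjective π := by
        intro g
        obtain ⟨a, ha, hag⟩ := IH (fun i => v i.castSucc) hvinit g
        exact ⟨⟨L a, Submodule.mem_map_of_mem ha⟩, funext hag⟩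
      let e := LinearEquiv.ofBijective π ⟨hπinj, hπsurj⟩
      let θ : (Fin n → V) →ₗ[E] V :=
        (LinearMap.snd E _ _).comp (M.subtype.comp e.symm.toLinearMap)
      have hθ : ∀ m : M, θ (π m) = (m : (Fin n → V) × V).2 := by
        intro m
        have h1 : e.symm (π m) = m := e.symm_apply_apply m
        show (M.subtype (e.symm (π m))).2 = _
        rw [h1]
        rfl
      have hθS : ∀ a ∈ A, θ (fun i => a (v i.castSucc)) = a (v (Fin.last n)) := by
        intro a ha
        exact hθ ⟨L a, Submodule.mem_map_of_mem ha⟩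
      -- coordinate maps commute with A
      have hcoord : ∀ j : Fin n, ∃ μ : E,
          θ.comp (LinearMap.single E (fun _ : Fin n => V) j) = μ • (1 : Module.End E V) := by
        intro j
        apply schur_scalar A hirr
        intro b hb
        ext x
        simp only [Module.End.mul_apply, LinearMap.comp_apply, Module.End.one_apply]
        -- goal: θ (single j (b x)) = b (θ (single j x))
        obtain ⟨a, ha, hax⟩ := IH (fun i => v i.castSucc) hvinit (Pi.single j x)
        have h1 : θ (Pi.single j x) = a (v (Fin.last n)) := by
          rw [← funext hax]; exact hθS a ha
        have h2 : θ (Pi.single j (b x)) = (b * a) (v (Fin.last n)) := by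
          have : (fun i => (b * a) (v i.castSucc)) = Pi.single j (b x) := by
            funext i
            simp only [Module.End.mul_apply]
            rw [hax i]
            by_cases hij : i = j
            · subst hij; simp
            · simp [Pi.single_eq_of_ne hij]
          rw [← this]; exact hθS (b * a) (A.mul_mem hb ha)
        show θ ((LinearMap.single E (fun _ : Fin n => V) j) (b x))
            = b (θ ((LinearMap.single E (fun _ : Fin n => V) j) x))
        have hs : ∀ y : V, (LinearMap.single E (fun _ : Fin n => V) j) y = Pi.single j y :=
          fun y => rfl
        rw [hs, hs, h1, h2]
        rfl
      choose μ hμ using hcoord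
      -- derive the contradiction with linear independence
      have hkey : v (Fin.last n) = ∑ j : Fin n, μ j • v j.castSucc := by
        have h1 : θ (fun i => v i.castSucc) = v (Fin.last n) := by
          have := hθS 1 A.one_mem
          simpa using this
        have h2 : (fun i : Fin n => v i.castSucc) = ∑ j : Fin n, Pi.single j (v j.castSucc) := by
          rw [Finset.univ_sum_single]
        rw [← h1, h2, map_sum]
        congr 1
        funext j
        have := congrArg (fun f => f (v j.castSucc)) (hμ j)
        simpa using this
      have hsnoc := linearIndependent_fin_snoc.mp (by rwa [Fin.snoc_init_self] : LinearIndependent E (Fin.snoc (Fin.init v) (v (Fin.last n))))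
      apply hsnoc.2
      rw [hkey]
      apply Submodule.sum_mem
      intro j _
      apply Submodule.smul_mem
      exact Submodule.subset_span ⟨j, rfl⟩
    -- separation at an arbitrary position
    have sep' : ∀ (v : Fin (n+1) → V), LinearIndependent E v → ∀ j : Fin (n+1),
        ∃ a ∈ A, a (v j) ≠ 0 ∧ ∀ i, i ≠ j → a (v i) = 0 := by
      intro v hv j
      let σ : Equiv.Perm (Fin (n+1)) := Equiv.swap j (Fin.last n)
      have hv' : LinearIndependent E (v ∘ σ) := hv.comp σ σ.injective
      obtain ⟨a, ha, h0, hlast⟩ := sep (v ∘ σ) hv'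
      refine ⟨a, ha, ?_, ?_⟩
      · simpa [σ, Equiv.swap_apply_right] using hlast
      · intro i hij
        have hσi : σ i ≠ Fin.last n := by
          intro h
          apply hij
          have := congrArg σ h
          rw [σ.apply_eq_iff_eq_symm_apply] at h
          simp [σ, Equiv.swap_apply_right] at h
          exact h
        have := h0 ((σ i).castPred hσi)
        rw [Fin.castSucc_castPred] at this
        simpa [σ] using this
    intro v hv w
    have key : ∀ j : Fin (n+1), ∃ a ∈ A, a (v j) = w j ∧ ∀ i, i ≠ j → a (v i) = 0 := by
      intro j
      obtain ⟨a, ha, hne, h0⟩ := sep' v hv j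
      obtain ⟨b, hb, hby⟩ := orbit_top A hirr hne (w j)
      refine ⟨b * a, A.mul_mem hb ha, hby, ?_⟩
      intro i hij
      show b (a (v i)) = 0
      rw [h0 i hij, map_zero]
    choose a ha haj ha0 using key
    refine ⟨∑ j, a j, sum_mem (fun j _ => ha j), ?_⟩
    intro i
    rw [LinearMap.sum_apply]
    rw [Finset.sum_eq_single i]
    · exact haj i
    · exact fun j _ hji => ha0 j i (fun h => hji (h ▸ rfl))
    · intro h; exact absurd (Finset.mem_univ i) h

end Part2

section Part3


variable {E V : Type} [Field E] [AddCommGroup V] [Module E V]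

lemma burnside_top [IsAlgClosed E] [FiniteDimensional E V]
    (A : Subalgebra E (Module.End E V))
    (hirr : ∀ W : Submodule E V, (∀ a ∈ A, ∀ x ∈ W, a x ∈ W) → W = ⊥ ∨ W = ⊤) :
    A = ⊤ := by
  rw [eq_top_iff]
  intro f _
  let b := Module.finBasis E V
  obtain ⟨a, ha, hab⟩ := density A hirr (finrank E V) b b.linearIndependent (fun i => f (b i))
  have : a = f := b.ext hab
  rwa [← this]

lemma root_pow_eq_one {m : ℕ} {M : Matrix (Fin m) (Fin m) E} {N : ℕ} (hM : M ^ N = 1)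
    {μ : E} (hμ : μ ∈ M.charpoly.roots) : μ ^ N = 1 := by
  have hroot : M.charpoly.IsRoot μ := (Polynomial.mem_roots'.mp hμ).2
  have hdet : (Matrix.scalar (Fin m) μ - M).det = 0 := by
    have h := hroot
    unfold Polynomial.IsRoot at h
    rw [Matrix.charpoly, _root_.eval_det, Matrix.matPolyEquiv_charmatrix] at h
    simpa using h
  obtain ⟨v, hv0, hv⟩ := Matrix.exists_mulVec_eq_zero_iff.mpr hdet
  have hMv : M *ᵥ v = μ • v := by
    have h1 : (Matrix.scalar (Fin m) μ) *ᵥ v - M *ᵥ v = 0 := by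
      rw [← Matrix.sub_mulVec]; exact hv
    have h2 : (Matrix.scalar (Fin m) μ) *ᵥ v = μ • v := by
      have : Matrix.scalar (Fin m) μ = μ • (1 : Matrix (Fin m) (Fin m) E) := by
        simp [Matrix.scalar, Matrix.smul_eq_diagonal_mul]
      rw [this, Matrix.smul_mulVec, Matrix.one_mulVec]
    rw [h2, sub_eq_zero] at h1
    exact h1.symm
  have hpow : ∀ j : ℕ, (M ^ j) *ᵥ v = μ ^ j • v := by
    intro j
    induction j with
    | zero => simp
    | succ j ih =>
      rw [pow_succ', ← Matrix.mulVec_mulVec, ih, Matrix.mulVec_smul, hMv, pow_succ']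
      rw [mul_smul, smul_comm]
  have hNv : μ ^ N • v = v := by
    have := hpow N
    rw [hM, Matrix.one_mulVec] at this
    exact this.symm
  obtain ⟨j, hj⟩ := Function.ne_iff.mp hv0
  have : μ ^ N * v j = v j := congrFun hNv j
  have hvj : v j ≠ 0 := by simpa using hj
  have hmul : (μ ^ N - 1) * v j = 0 := by
    rw [sub_mul, this, one_mul, sub_self]
  rcases mul_eq_zero.mp hmul with h | h
  · have := sub_eq_zero.mp h
    exact this
  · exact absurd h hvj

end Part3

section Part4


variable {E : Type} [Field E]

lemma trace_mem_sums [IsAlgClosed E] {m : ℕ} {M : Matrix (Fin m) (Fin m) E} {N : ℕ}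
    (hM : M ^ N = 1) :
    ∃ t : Fin m → E, (∀ i, (t i) ^ N = 1) ∧ M.trace = ∑ i, t i := by
  have hsplit : Splits M.charpoly := IsAlgClosed.splits _
  have hcard : Multiset.card M.charpoly.roots = m := by
    rw [Polynomial.splits_iff_card_roots.mp hsplit, Matrix.charpoly_natDegree_eq_dim,
      Fintype.card_fin]
  let l := M.charpoly.roots.toList
  have hlen : l.length = m := by rw [Multiset.length_toList, hcard]
  refine ⟨fun i => l.get (Fin.cast hlen.symm i), ?_, ?_⟩
  · intro i
    apply root_pow_eq_one hM
    rw [← Multiset.mem_toList]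
    apply List.get_mem
  · rw [Matrix.trace_eq_sum_roots_charpoly, ← Multiset.sum_toList]
    show l.sum = _
    conv_lhs => rw [← List.ofFn_get l]
    rw [List.sum_ofFn]
    exact (Fintype.sum_equiv (finCongr hlen.symm) _ _ (fun i => rfl)).symm

lemma matrix_trace_nondeg {m : ℕ} (M : Matrix (Fin m) (Fin m) E)
    (h : ∀ X : Matrix (Fin m) (Fin m) E, (M * X).trace = 0) : M = 0 := by
  ext i j
  have hX := h (Matrix.single j i 1)
  simp only [Matrix.trace, Matrix.diag, Matrix.mul_apply, Matrix.single,
    Matrix.of_apply, mul_ite, mul_one, mul_zero] at hX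
  simp only [ite_and, Finset.sum_ite_eq, Finset.mem_univ, if_true] at hX
  simpa using hX


end Part4



theorem finite_submonoid (E : Type) [Field E] [IsAlgClosed E] (N : ℕ) (hNE : (N : E) ≠ 0) :
    ∀ (n : ℕ) (V : Type) [AddCommGroup V] [Module E V] [FiniteDimensional E V],
      finrank E V ≤ n → ∀ S : Submonoid (Module.End E V), (∀ f ∈ S, f ^ N = 1) → Finite ↥S := by
  have hN0 : N ≠ 0 := fun h => hNE (by rw [h]; simp)
  intro n
  induction n using Nat.strong_induction_on with
  | _ n IH =>
  intro V _ _ _ hn S hS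
  have hSs : ∀ s : ↥S, s ^ N = 1 := fun s => Subtype.ext (hS s s.2)
  by_cases hNT : Nontrivial V
  case neg =>
    have h1 : Subsingleton V := not_nontrivial_iff_subsingleton.mp hNT
    have h2 : Subsingleton (Module.End E V) :=
      ⟨fun f g => LinearMap.ext fun x => Subsingleton.elim _ _⟩
    have : Subsingleton ↥S := ⟨fun a b => Subtype.ext (Subsingleton.elim _ _)⟩
    exact Finite.of_subsingleton
  case pos =>
  by_cases hirr : ∀ W : Submodule E V, (∀ f ∈ S, ∀ x ∈ W, f x ∈ W) → W = ⊥ ∨ W = ⊤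
  case pos =>
    -- irreducible case
    classical
    set d := finrank E V with hd
    let b := Module.finBasis E V
    let ψ := LinearMap.toMatrixAlgEquiv b
    let A := Algebra.adjoin E (S : Set (Module.End E V))
    have hirrA : ∀ W : Submodule E V, (∀ a ∈ A, ∀ x ∈ W, a x ∈ W) → W = ⊥ ∨ W = ⊤ :=
      fun W h => hirr W (fun f hf x hx => h f (Algebra.subset_adjoin hf) x hx)
    have hAtop : A = ⊤ := burnside_top A hirrA
    have hspan : Submodule.span E (S : Set (Module.End E V)) = ⊤ := by
      have h1 := Algebra.adjoin_eq_span E (S : Set (Module.End E V))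
      rw [Submonoid.closure_eq] at h1
      rw [show Algebra.adjoin E (S : Set (Module.End E V)) = A from rfl, hAtop] at h1
      rw [← h1]
      rfl
    obtain ⟨t, ht⟩ := Module.finite_def.mp (inferInstance : Module.Finite E (Module.End E V))
    have hxmem : ∀ x ∈ t, ∃ T : Finset (Module.End E V),
        ↑T ⊆ (S : Set (Module.End E V)) ∧ x ∈ Submodule.span E (T : Set (Module.End E V)) := by
      intro x _
      exact Submodule.mem_span_finite_of_mem_span (by rw [hspan]; trivial)
    choose Tf hTf1 hTf2 using hxmem
    let B : Finset (Module.End E V) := t.attach.biUnion (fun x => Tf x x.2)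
    have hBS : ∀ x ∈ B, x ∈ S := by
      intro x hx
      obtain ⟨y, _, hy2⟩ := Finset.mem_biUnion.mp hx
      exact hTf1 y y.2 hy2
    have hBspan : Submodule.span E (B : Set (Module.End E V)) = ⊤ := by
      rw [eq_top_iff, ← ht]
      rw [Submodule.span_le]
      intro x hx
      have h1 : x ∈ Submodule.span E ((Tf x hx : Finset (Module.End E V)) : Set _) := hTf2 x hx
      refine Submodule.span_mono ?_ h1
      intro y hy
      exact Finset.mem_coe.mpr (Finset.mem_biUnion.mpr ⟨⟨x, hx⟩, Finset.mem_attach _ _, hy⟩)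
    -- the finite set of possible traces
    let R : Set E := {x | x ^ N = 1}
    have hRfin : R.Finite := by
      apply Set.Finite.subset (Polynomial.nthRoots N (1 : E)).toFinset.finite_toSet
      intro x hx
      rw [Finset.mem_coe, Multiset.mem_toFinset, Polynomial.mem_nthRoots (Nat.pos_of_ne_zero hN0)]
      exact hx
    let Tr : Set E := {x | ∃ u : Fin d → E, (∀ i, u i ∈ R) ∧ x = ∑ i, u i}
    have hTrfin : Tr.Finite := by
      have h1 : {u : Fin d → E | ∀ i, u i ∈ R}.Finite := by
        have : {u : Fin d → E | ∀ i, u i ∈ R} = Set.pi Set.univ (fun _ => R) := by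
          ext u; simp [Set.mem_pi]
        rw [this]
        exact Set.Finite.pi (fun _ => hRfin)
      apply Set.Finite.subset (h1.image (fun u => ∑ i, u i))
      rintro x ⟨u, hu, rfl⟩
      exact ⟨u, hu, rfl⟩
    have htr : ∀ f ∈ S, (ψ f).trace ∈ Tr := by
      intro f hf
      obtain ⟨u, h1, h2⟩ := trace_mem_sums (M := ψ f) (N := N)
        (by rw [← map_pow, hS f hf, _root_.map_one])
      exact ⟨u, fun i => h1 i, h2⟩
    haveI := hTrfin.to_subtype
    refine Finite.of_injective (fun f : ↥S => (fun x : ↥B =>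
      (⟨(ψ ((f : Module.End E V) * (x : Module.End E V))).trace,
        htr _ (S.mul_mem f.2 (hBS x x.2))⟩ : ↥Tr))) ?_
    intro f g hfg
    have hzero : ∀ x ∈ B, (ψ (((f : Module.End E V) - g) * x)).trace = 0 := by
      intro x hx
      have h1 := congrFun hfg ⟨x, hx⟩
      have h2 := Subtype.ext_iff.mp h1
      simp only at h2
      rw [sub_mul, map_sub, Matrix.trace_sub, h2, sub_self]
    have hall : ∀ y : Module.End E V, (ψ (((f : Module.End E V) - g) * y)).trace = 0 := by
      let ℓ : Module.End E V →ₗ[E] E :=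
        (Matrix.traceLinearMap (Fin d) E E).comp
          (ψ.toLinearMap.comp (LinearMap.mulLeft E ((f : Module.End E V) - g)))
      have hker : Submodule.span E (B : Set (Module.End E V)) ≤ LinearMap.ker ℓ := by
        rw [Submodule.span_le]
        intro x hx
        exact LinearMap.mem_ker.mpr (hzero x hx)
      intro y
      have : y ∈ LinearMap.ker ℓ := hker (by rw [hBspan]; trivial)
      exact LinearMap.mem_ker.mp this
    have hmat : ψ ((f : Module.End E V) - g) = 0 := by
      apply matrix_trace_nondeg
      intro X
      have := hall (ψ.symm X)
      rwa [_root_.map_mul, AlgEquiv.apply_symm_apply] at this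
    have hsub : (f : Module.End E V) - g = 0 :=
      ψ.injective (show ψ ((f : Module.End E V) - g) = ψ 0 by rw [hmat, _root_.map_zero])
    exact Subtype.ext (sub_eq_zero.mp hsub)
  case neg =>
    push_neg at hirr
    obtain ⟨W, hWinv, hWbot, hWtop⟩ := hirr
    let φ₁ : ↥S →* Module.End E ↥W :=
      { toFun := fun g => LinearMap.restrict (g : Module.End E V)
          (fun x hx => hWinv (g : Module.End E V) g.2 x hx)
        map_one' := by
          ext x
          simp [LinearMap.restrict_apply]
        map_mul' := fun g h => by
          ext x
          simp [LinearMap.restrict_apply] }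
    let φ₂ : ↥S →* Module.End E (V ⧸ W) :=
      { toFun := fun g => Submodule.mapQ W W (g : Module.End E V)
          (fun x hx => hWinv (g : Module.End E V) g.2 x hx)
        map_one' := by
          apply Submodule.linearMap_qext
          ext x
          simp [Submodule.mapQ_apply]
        map_mul' := fun g h => by
          apply Submodule.linearMap_qext
          ext x
          simp [Submodule.mapQ_apply] }
    have hWnt : Nontrivial ↥W := Submodule.nontrivial_iff_ne_bot.mpr hWbot
    have hWpos : 0 < finrank E ↥W := finrank_pos
    have hW_lt : finrank E ↥W < finrank E V := Submodule.finrank_lt hWtop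
    have hQ_lt : finrank E (V ⧸ W) < finrank E V := by
      have h1 := Submodule.finrank_quotient_add_finrank W
      omega
    have hT₁ : Finite ↥(MonoidHom.mrange φ₁) := by
      refine IH (finrank E ↥W) (lt_of_lt_of_le hW_lt hn) ↥W le_rfl (MonoidHom.mrange φ₁) ?_
      rintro h ⟨g, rfl⟩
      rw [← map_pow, hSs g, _root_.map_one]
    have hT₂ : Finite ↥(MonoidHom.mrange φ₂) := by
      refine IH (finrank E (V ⧸ W)) (lt_of_lt_of_le hQ_lt hn) (V ⧸ W) le_rfl (MonoidHom.mrange φ₂) ?_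
      rintro h ⟨g, rfl⟩
      rw [← map_pow, hSs g, _root_.map_one]
    refine Finite.of_injective (fun g : ↥S =>
      ((⟨φ₁ g, g, rfl⟩ : ↥(MonoidHom.mrange φ₁)), (⟨φ₂ g, g, rfl⟩ : ↥(MonoidHom.mrange φ₂)))) ?_
    intro g g' hgg
    have h1 : φ₁ g = φ₁ g' := Subtype.ext_iff.mp (Prod.ext_iff.mp hgg).1
    have h2 : φ₂ g = φ₂ g' := Subtype.ext_iff.mp (Prod.ext_iff.mp hgg).2
    let u : ↥S := g ^ (N - 1) * g'
    have hNsub : N - 1 + 1 = N := Nat.succ_pred_eq_of_pos (Nat.pos_of_ne_zero hN0)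
    have hgN : g ^ (N - 1) * g = 1 := by
      rw [← pow_succ, hNsub, hSs g]
    have hu1 : φ₁ u = 1 := by
      show φ₁ (g ^ (N - 1) * g') = 1
      rw [_root_.map_mul, map_pow, ← h1, ← map_pow, ← _root_.map_mul, hgN, _root_.map_one]
    have hu2 : φ₂ u = 1 := by
      show φ₂ (g ^ (N - 1) * g') = 1
      rw [_root_.map_mul, map_pow, ← h2, ← map_pow, ← _root_.map_mul, hgN, _root_.map_one]
    have huW : ∀ x (hx : x ∈ W), (u : Module.End E V) x = x := by
      intro x hx
      have h3 := congrArg (fun f : Module.End E ↥W => (f ⟨x, hx⟩ : ↥W)) hu1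
      have h4 := Subtype.ext_iff.mp h3
      exact h4
    have huQ : ∀ x : V, (u : Module.End E V) x - x ∈ W := by
      intro x
      have h3 := congrArg (fun f : Module.End E (V ⧸ W) => f (Submodule.Quotient.mk x)) hu2
      have h4 : Submodule.Quotient.mk ((u : Module.End E V) x)
          = (Submodule.Quotient.mk x : V ⧸ W) := by
        exact h3
      exact (Submodule.Quotient.eq W).mp h4
    set nn : Module.End E V := (u : Module.End E V) - 1 with hnn
    have hnn2 : nn * nn = 0 := by
      apply LinearMap.ext
      intro x
      have h3 : nn x ∈ W := by
        simpa [hnn, LinearMap.sub_apply, Module.End.one_apply] using huQ x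
      show nn (nn x) = 0
      have h4 : (u : Module.End E V) (nn x) = nn x := huW _ h3
      have h5 : nn (nn x) = (u : Module.End E V) (nn x) - nn x := rfl
      rw [h5, h4, sub_self]
    have hu_pow : ∀ j : ℕ, (u : Module.End E V) ^ j = 1 + j • nn := by
      intro j
      induction j with
      | zero => simp
      | succ j ih =>
        have hu_eq : (u : Module.End E V) = 1 + nn := by rw [hnn]; abel
        rw [pow_succ, ih, hu_eq, mul_add, mul_one, add_mul, one_mul, smul_mul_assoc, hnn2,
          smul_zero, add_zero, succ_nsmul]
        abel
    have hNnn : (N : E) • nn = 0 := by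
      have h3 : ((u : Module.End E V)) ^ N = 1 := by
        have h4 := hSs u
        have h5 := Subtype.ext_iff.mp h4
        rw [SubmonoidClass.coe_pow] at h5
        exact h5
      rw [hu_pow N] at h3
      have h6 : (N • nn : Module.End E V) = 0 := by
        have := congrArg (fun z : Module.End E V => z - 1) h3
        simpa using this
      rw [Nat.cast_smul_eq_nsmul E]
      exact h6
    have hnn0 : nn = 0 := by
      rcases smul_eq_zero.mp hNnn with h | h
      · exact absurd h hNE
      · exact h
    have hu_one : u = (1 : ↥S) := by
      apply Subtype.ext
      have : (u : Module.End E V) - 1 = 0 := hnn0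
      exact sub_eq_zero.mp this
    have h8 : g * u = g' := by
      show g * (g ^ (N - 1) * g') = g'
      rw [← mul_assoc, ← pow_succ', hNsub, hSs g, one_mul]
    rw [← h8, hu_one, mul_one]




/-- a subgroup of `GL(d, F)` of exponent dividing `p ^ k`, where `p` is a prime
different from the characteristic of `F`, is finite. -/
theorem stmt12 (F : Type) [Field F] (p : ℕ) (hp : p.Prime) (hchar : ringChar F ≠ p)
    (d k : ℕ) (G : Subgroup (GL (Fin d) F)) (hG : ∀ g ∈ G, g ^ (p ^ k) = 1) :
    Finite ↥G := by
  let E := AlgebraicClosure F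
  haveI hcE : CharP E (ringChar F) :=
    charP_of_injective_algebraMap (algebraMap F E).injective (ringChar F)
  have hpE : (p : E) ≠ 0 := by
    intro h0
    have hdvd : ringChar F ∣ p := (CharP.cast_eq_zero_iff E (ringChar F) p).mp h0
    rcases hp.eq_one_or_self_of_dvd _ hdvd with h | h
    · exact CharP.char_ne_one E (ringChar F) h
    · exact hchar h
  have hNE : ((p ^ k : ℕ) : E) ≠ 0 := by
    push_cast
    exact pow_ne_zero k hpE
  let φ : Matrix (Fin d) (Fin d) F →+* Matrix (Fin d) (Fin d) E := (algebraMap F E).mapMatrix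
  let χ : GL (Fin d) F →* Module.End E (Fin d → E) :=
    { toFun := fun g => Matrix.toLinAlgEquiv' (φ (g : Matrix (Fin d) (Fin d) F))
      map_one' := by simp
      map_mul' := fun g h => by simp [Units.val_mul] }
  have hχinj : Function.Injective χ := by
    intro g h hgh
    have h1 : φ (g : Matrix (Fin d) (Fin d) F) = φ (h : Matrix (Fin d) (Fin d) F) :=
      Matrix.toLinAlgEquiv'.injective hgh
    apply Units.ext
    apply Matrix.ext
    intro i j
    apply (algebraMap F E).injective
    exact congrFun (congrFun h1 i) j
  let S : Submonoid (Module.End E (Fin d → E)) := MonoidHom.mrange (χ.comp G.subtype)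
  have hS : ∀ f ∈ S, f ^ (p ^ k) = 1 := by
    rintro f ⟨g, rfl⟩
    rw [← map_pow]
    have hg : g ^ (p ^ k) = (1 : ↥G) := by
      apply Subtype.ext
      push_cast
      exact hG g g.2
    rw [hg, _root_.map_one]
  have hfin : Finite ↥S :=
    finite_submonoid E (p ^ k) hNE (finrank E (Fin d → E)) (Fin d → E) le_rfl S hS
  refine Finite.of_injective
    (fun g : ↥G => (⟨(χ.comp G.subtype) g, ⟨g, rfl⟩⟩ : ↥S)) ?_
  intro g g' hgg
  have h1 : (χ.comp G.subtype) g = (χ.comp G.subtype) g' := Subtype.ext_iff.mp hgg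
  exact Subtype.ext (hχinj h1)
end

section
/- Let p and q be distinct primes. For every k ∈ ℕ, every family of fields F : Fin k → Type and every family of dimensions d : Fin k → ℕ, there is no injective group homomorphism from the free product (⨁_{n : ℕ} ZMod p) * (⨁_{n : ℕ} ZMod q) into the product group ∏ i, GL(Fin (d i), F i). In other words, (ℤ/p)^ω * (ℤ/q)^ω is not a subdirect product of finitely many linear groups. -/
set_option synthInstance.maxHeartbeats 1000000
set_option maxHeartbeats 1600000

open Matrix

lemma nilp_aux {R : Type*} [CommRing R] {n : R} (hn : IsNilpotent n) {p : ℕ} (hp : 2 ≤ p)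
    (hu : IsUnit (p : R)) (h : (1 + n) ^ p = 1) : n = 0 := by
  obtain ⟨m, rfl⟩ : ∃ m, p = m + 2 := ⟨p - 2, by omega⟩
  rw [add_comm, add_pow] at h
  rw [Finset.sum_range_succ', Finset.sum_range_succ'] at h
  simp only [pow_zero, one_mul, one_pow, mul_one, zero_add, pow_one, Nat.choose_one_right,
    Nat.choose_zero_right, Nat.cast_one, Nat.cast_ofNat, Nat.cast_add] at h
  rw [← sub_eq_zero] at h
  rw [add_sub_cancel_right] at h
  set t : R := ∑ x ∈ Finset.range (m + 1), n ^ x * ((m + 2).choose (x + 2) : R) with ht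
  have hsum : ∑ x ∈ Finset.range (m + 1), n ^ (x + 1 + 1) * ((m + 2).choose (x + 1 + 1) : R)
      = n * (n * t) := by
    rw [ht, Finset.mul_sum, Finset.mul_sum]
    exact Finset.sum_congr rfl fun k _ => by ring
  have key : n * (((m : R) + 2) + n * t) = 0 := by
    rw [mul_add, ← hsum, add_comm]
    convert h using 2
  have hUnit : IsUnit (((m : R) + 2) + n * t) := by
    refine IsNilpotent.isUnit_add_left_of_commute ((Commute.all n t).isNilpotent_mul_right hn) ?_ (Commute.all _ _)
    have : ((m : R) + 2) = ((m + 2 : ℕ) : R) := by push_cast; ring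
    rwa [this]
  exact (IsUnit.mul_left_eq_zero hUnit).mp key

lemma roots_fin {R : Type*} [CommRing R] [IsArtinianRing R] {p : ℕ} (hp : 2 ≤ p)
    (hu : IsUnit (p : R)) : {x : R | x ^ p = 1}.Finite := by
  classical
  haveI : Finite (MaximalSpectrum R) := inferInstance
  let g : R →+* ∀ I : MaximalSpectrum R, R ⧸ I.asIdeal :=
    (IsArtinianRing.quotNilradicalEquivPi R).toRingHom.comp (Ideal.Quotient.mk (nilradical R))
  have hinj : Set.InjOn g {x : R | x ^ p = 1} := by
    intro x hx y hy hxy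
    have hmk : Ideal.Quotient.mk (nilradical R) (x - y) = 0 := by
      have h1 : Ideal.Quotient.mk (nilradical R) x = Ideal.Quotient.mk (nilradical R) y :=
        (IsArtinianRing.quotNilradicalEquivPi R).injective hxy
      rw [map_sub, h1, sub_self]
    have hnil : IsNilpotent (x - y) := by
      rwa [Ideal.Quotient.eq_zero_iff_mem, mem_nilradical] at hmk
    have hxp : x ^ p = 1 := hx
    have hyp : y ^ p = 1 := hy
    have hy1 : y ^ (p - 1) * y = 1 := by
      rw [← pow_succ, Nat.sub_add_cancel (by omega), hyp]
    set n := (x - y) * y ^ (p - 1) with hn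
    have hnnil : IsNilpotent n := (Commute.all _ _).isNilpotent_mul_right hnil
    have h1n : 1 + n = x * y ^ (p - 1) := by
      rw [hn, sub_mul, mul_comm y]
      rw [hy1]; ring
    have hpow : (1 + n) ^ p = 1 := by
      rw [h1n, mul_pow, ← pow_mul, mul_comm (p - 1), pow_mul, hxp, hyp, one_pow, one_mul]
    have hn0 : n = 0 := nilp_aux hnnil hp hu hpow
    have hx1 : x * y ^ (p - 1) = 1 := by rw [← h1n, hn0, add_zero]
    calc x = x * (y ^ (p - 1) * y) := by rw [hy1, mul_one]
    _ = (x * y ^ (p - 1)) * y := by ring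
    _ = y := by rw [hx1, one_mul]
  have hT : (Set.pi Set.univ fun I : MaximalSpectrum R =>
      {c : R ⧸ I.asIdeal | c ^ p = 1}).Finite := by
    refine Set.Finite.pi fun I => ?_
    haveI : I.asIdeal.IsMaximal := I.isMaximal
    letI : Field (R ⧸ I.asIdeal) := Ideal.Quotient.field I.asIdeal
    refine Set.Finite.subset (Polynomial.nthRoots p (1 : R ⧸ I.asIdeal)).toFinset.finite_toSet ?_
    intro c hc
    rw [Finset.mem_coe, Multiset.mem_toFinset, Polynomial.mem_nthRoots (by omega : 0 < p)]
    exact hc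
  refine Set.Finite.of_finite_image (hT.subset ?_) hinj
  rintro _ ⟨x, hx, rfl⟩
  rw [Set.mem_pi]
  intro I _
  have : (g x) ^ p = 1 := by rw [← map_pow, hx, _root_.map_one]
  exact congrFun this I

lemma abstract_fin {F : Type*} [Field F] {R : Type*} [CommRing R] [Algebra F R]
    [FiniteDimensional F R] {p : ℕ} (hp : 2 ≤ p) (hF : (p : F) ≠ 0)
    {G K : Type*} [One K] (α : G → K) (f : G → R) (hfp : ∀ g, f g ^ p = 1)
    (hdet : ∀ g h : G, f g = f h → α g = α h) : (Set.range α).Finite := by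
  classical
  haveI hart0 : IsArtinian F R :=
    isArtinian_of_linearEquiv (Module.finBasis F R).equivFun.symm
  haveI hart : IsArtinianRing R := isArtinian_of_tower F hart0
  have hu : IsUnit (p : R) := by
    rw [← map_natCast (algebraMap F R)]
    exact (IsUnit.mk0 _ hF).map (algebraMap F R)
  have hfin : (Set.range f).Finite := by
    refine (roots_fin hp hu).subset ?_
    rintro _ ⟨g, rfl⟩
    exact hfp g
  refine ((hfin.image (fun x : R => if hx : ∃ g : G, f g = x then α hx.choose else 1)).subset ?_)
  rintro _ ⟨g, rfl⟩
  refine ⟨f g, Set.mem_range_self g, ?_⟩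
  have hex : ∃ g' : G, f g' = f g := ⟨g, rfl⟩
  dsimp only
  rw [dif_pos hex]
  exact hdet _ _ hex.choose_spec

lemma range_fin {F : Type*} [Field F] {dd : ℕ} {G : Type*} [CommGroup G] {p : ℕ} (hp : 2 ≤ p)
    (hF : (p : F) ≠ 0) (hexp : ∀ g : G, g ^ p = 1) (α : G →* GL (Fin dd) F) :
    (Set.range α).Finite := by
  classical
  set m : G → Matrix (Fin dd) (Fin dd) F := fun g => ((α g : GL (Fin dd) F) : Matrix _ _ F)
    with hm
  set s : Set (Matrix (Fin dd) (Fin dd) F) := Set.range m with hs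
  have hcomm : ∀ a ∈ s, ∀ b ∈ s, a * b = b * a := by
    rintro _ ⟨g, rfl⟩ _ ⟨h, rfl⟩
    have h1 : α g * α h = α h * α g := by rw [← α.map_mul, ← α.map_mul, mul_comm]
    have h2 := congrArg Units.val h1
    rwa [Units.val_mul, Units.val_mul] at h2
  haveI hfd : FiniteDimensional F ↥(Algebra.adjoin F s) := inferInstance
  letI commInst : CommRing ↥(Algebra.adjoin F s) := Algebra.adjoinCommRingOfComm F hcomm
  set f : G → ↥(Algebra.adjoin F s) :=
    fun g => ⟨m g, Algebra.subset_adjoin (Set.mem_range_self g)⟩ with hf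
  have hfp : ∀ g : G, f g ^ p = 1 := by
    intro g
    have hg : (α g) ^ p = 1 := by rw [← map_pow, hexp]; exact _root_.map_one α
    refine Subtype.ext ?_
    rw [SubmonoidClass.coe_pow, OneMemClass.coe_one]
    show (m g) ^ p = 1
    calc (m g) ^ p = (((α g) ^ p : GL (Fin dd) F) : Matrix _ _ F) :=
          (Units.val_pow_eq_pow_val _ _).symm
    _ = 1 := by rw [hg, Units.val_one]
  have hdet : ∀ g h : G, f g = f h → α g = α h := by
    intro g h hgh
    exact Units.ext (congrArg Subtype.val hgh)
  exact abstract_fin hp hF α f hfp hdet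

open Monoid

lemma coprod_comm_ne_one {G H : Type} [Group G] [Group H] {a : G} {b : H}
    (ha : a ≠ 1) (hb : b ≠ 1) :
    Coprod.inl a * Coprod.inr b * (Coprod.inl a : Coprod G H)⁻¹ * (Coprod.inr b)⁻¹ ≠ 1 := by
  classical
  -- map to CoprodI over Bool
  letI Gb : Bool → Type := fun i => cond i G H
  letI : ∀ i : Bool, Group (Gb i) := fun i => match i with
    | true => ‹Group G›
    | false => ‹Group H›
  let e : Coprod G H →* CoprodI Gb :=
    Coprod.lift (CoprodI.of (M := Gb) (i := true)) (CoprodI.of (M := Gb) (i := false))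
  intro hcon
  have he : e (Coprod.inl a * Coprod.inr b * (Coprod.inl a : Coprod G H)⁻¹ * (Coprod.inr b)⁻¹)
      = CoprodI.of (M := Gb) (i := true) a * CoprodI.of (M := Gb) (i := false) b
        * (CoprodI.of (M := Gb) (i := true) a)⁻¹ * (CoprodI.of (M := Gb) (i := false) b)⁻¹ := by
    simp only [_root_.map_mul, map_inv, e, Coprod.lift_apply_inl, Coprod.lift_apply_inr]
  rw [hcon, _root_.map_one] at he
  -- build the nonempty word
  have htf : (true : Bool) ≠ false := by decide
  let W : CoprodI.NeWord Gb true false :=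
    .append (.append (.append (.singleton (i := true) a ha) htf (.singleton (i := false) b hb))
      htf.symm (.singleton (i := true) a⁻¹ (inv_ne_one.mpr ha))) htf
      (.singleton (i := false) b⁻¹ (inv_ne_one.mpr hb))
  have hW : W.prod = CoprodI.of (M := Gb) (i := true) a * CoprodI.of (M := Gb) (i := false) b
      * (CoprodI.of (M := Gb) (i := true) a)⁻¹ * (CoprodI.of (M := Gb) (i := false) b)⁻¹ := by
    simp only [W, CoprodI.NeWord.append_prod, CoprodI.NeWord.prod_singleton, map_inv]
  have hWne : W.prod ≠ 1 := by
    have h1 : W.prod = CoprodI.Word.prod W.toWord := rfl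
    have h2 : (1 : CoprodI Gb) = CoprodI.Word.prod CoprodI.Word.empty :=
      (CoprodI.Word.prod_empty).symm
    intro hq
    rw [h1, h2] at hq
    have hinj : Function.Injective (CoprodI.Word.prod (M := Gb)) := by
      intro u v huv
      have : CoprodI.Word.equiv.symm u = CoprodI.Word.equiv.symm v := huv
      exact CoprodI.Word.equiv.symm.injective this
    have := hinj hq
    have := congrArg CoprodI.Word.toList this
    rw [CoprodI.Word.empty_toList] at this
    exact W.toList_ne_nil this
  rw [← hW] at he
  exact hWne he.symm

-- exponent lemma
lemma mult_exp (p : ℕ) (g : Multiplicative (DirectSum ℕ fun _ => ZMod p)) : g ^ p = 1 := by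
  have h : ∀ x : DirectSum ℕ (fun _ => ZMod p), p • x = 0 := by
    intro x
    refine DFinsupp.ext fun n => ?_
    rw [DFinsupp.smul_apply, DFinsupp.zero_apply, nsmul_eq_mul, ZMod.natCast_self, zero_mul]
  have h2 : Multiplicative.toAdd (g ^ p) = 0 := by
    rw [toAdd_pow]
    exact h _
  rw [← ofAdd_toAdd (g ^ p), h2, ofAdd_zero]

-- infiniteness
lemma mult_inf (p : ℕ) (hp : p.Prime) : Infinite (Multiplicative (DirectSum ℕ fun _ => ZMod p)) := by
  haveI := Fact.mk hp.one_lt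
  haveI : Infinite (DirectSum ℕ fun _ => ZMod p) := by
    refine Infinite.of_injective (fun n => DirectSum.of (fun _ => ZMod p) n 1) ?_
    intro n m hnm
    by_contra hne
    have h1 := congrFun (congrArg DFunLike.coe hnm) n
    rw [DirectSum.of_eq_same, DirectSum.of_eq_of_ne _ _ _ hne] at h1
    exact one_ne_zero h1
  exact inferInstance

-- nontrivial element in finite-index subgroup
lemma exists_ne_one_of_finiteIndex {G : Type*} [Group G] [Infinite G] (K : Subgroup G)
    [K.FiniteIndex] : ∃ a : G, a ∈ K ∧ a ≠ 1 := by
  have hcard : Nat.card K * K.index = Nat.card G := Subgroup.card_mul_index K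
  have h0 : Nat.card G = 0 := Nat.card_eq_zero_of_infinite
  rw [h0] at hcard
  have hK : Nat.card K = 0 := by
    rcases Nat.mul_eq_zero.mp hcard with h | h
    · exact h
    · exact absurd h Subgroup.FiniteIndex.index_ne_zero
  haveI : Infinite K := by
    rcases Nat.card_eq_zero.mp hK with h | h
    · exact (h.false (⟨1, K.one_mem⟩ : K)).elim
    · exact h
  obtain ⟨⟨a, ha⟩, hne⟩ := exists_ne (⟨1, K.one_mem⟩ : K)
  exact ⟨a, ha, fun h => hne (Subtype.ext h)⟩

/-- for distinct primes `p` and `q`, the free product `(ℤ/p)^ω * (ℤ/q)^ω` is not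
a subdirect product of finitely many linear groups. -/
theorem stmt13 (p q : ℕ) (hp : p.Prime) (hq : q.Prime) (hpq : p ≠ q)
    (k : ℕ) (F : Fin k → Type) [∀ i, Field (F i)] (d : Fin k → ℕ) :
    ¬ ∃ φ : Monoid.Coprod (Multiplicative (DirectSum ℕ fun _ => ZMod p))
          (Multiplicative (DirectSum ℕ fun _ => ZMod q)) →*
        (∀ i, GL (Fin (d i)) (F i)), Function.Injective φ := by
  rintro ⟨φ, hφ⟩
  classical
  haveI : Infinite (Multiplicative (DirectSum ℕ fun _ => ZMod p)) := mult_inf p hp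
  haveI : Infinite (Multiplicative (DirectSum ℕ fun _ => ZMod q)) := mult_inf q hq
  set α : ∀ i : Fin k, Multiplicative (DirectSum ℕ fun _ => ZMod p) →* GL (Fin (d i)) (F i) :=
    fun i => (Pi.evalMonoidHom (fun i => GL (Fin (d i)) (F i)) i).comp
      (φ.comp Monoid.Coprod.inl) with hα
  set β : ∀ i : Fin k, Multiplicative (DirectSum ℕ fun _ => ZMod q) →* GL (Fin (d i)) (F i) :=
    fun i => (Pi.evalMonoidHom (fun i => GL (Fin (d i)) (F i)) i).comp
      (φ.comp Monoid.Coprod.inr) with hβ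
  have hchar : ∀ i, (p : F i) ≠ 0 ∨ (q : F i) ≠ 0 := by
    intro i
    by_contra hcon
    push_neg at hcon
    obtain ⟨hp0, hq0⟩ := hcon
    haveI := ringChar.charP (F i)
    have hdp : ringChar (F i) ∣ p := (CharP.cast_eq_zero_iff (F i) _ p).mp hp0
    have hdq : ringChar (F i) ∣ q := (CharP.cast_eq_zero_iff (F i) _ q).mp hq0
    have hcop : Nat.gcd p q = 1 := (Nat.coprime_primes hp hq).mpr hpq
    have h1 : ringChar (F i) ∣ 1 := hcop ▸ Nat.dvd_gcd hdp hdq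
    have h2 : ringChar (F i) = 1 := Nat.dvd_one.mp h1
    have h3 := CharP.cast_eq_zero (F i) (ringChar (F i))
    rw [h2, Nat.cast_one] at h3
    exact one_ne_zero h3
  have hsplit : ∀ i, (Set.range (α i)).Finite ∨ (Set.range (β i)).Finite := by
    intro i
    rcases hchar i with h | h
    · exact Or.inl (range_fin hp.two_le h (mult_exp p) (α i))
    · exact Or.inr (range_fin hq.two_le h (mult_exp q) (β i))
  set HA : Fin k → Subgroup (Multiplicative (DirectSum ℕ fun _ => ZMod p)) :=
    fun i => if (Set.range (α i)).Finite then (α i).ker else ⊤ with hHA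
  set HB : Fin k → Subgroup (Multiplicative (DirectSum ℕ fun _ => ZMod q)) :=
    fun i => if (Set.range (β i)).Finite then (β i).ker else ⊤ with hHB
  have hfin : ∀ {G K : Type} [Group G] [Group K] (f : G →* K), (Set.range f).Finite →
      f.ker.FiniteIndex := by
    intro G K _ _ f hf
    refine ⟨?_⟩
    rw [Subgroup.index_ker]
    haveI : Finite f.range := by
      have hc : (f.range : Set K) = Set.range f := f.coe_range
      exact (hc ▸ hf).to_subtype
    exact Nat.card_ne_zero.mpr ⟨⟨⟨1, f.range.one_mem⟩⟩, inferInstance⟩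
  haveI hHAfi : ∀ i, (HA i).FiniteIndex := by
    intro i
    by_cases h : (Set.range (α i)).Finite
    · simpa only [hHA, if_pos h] using hfin (α i) h
    · simpa only [hHA, if_neg h] using (inferInstance : (⊤ : Subgroup _).FiniteIndex)
  haveI hHBfi : ∀ i, (HB i).FiniteIndex := by
    intro i
    by_cases h : (Set.range (β i)).Finite
    · simpa only [hHB, if_pos h] using hfin (β i) h
    · simpa only [hHB, if_neg h] using (inferInstance : (⊤ : Subgroup _).FiniteIndex)
  haveI : (⨅ i, HA i).FiniteIndex := Subgroup.finiteIndex_iInf (fun i => hHAfi i)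
  haveI : (⨅ i, HB i).FiniteIndex := Subgroup.finiteIndex_iInf (fun i => hHBfi i)
  obtain ⟨a, haK, hane⟩ := exists_ne_one_of_finiteIndex (⨅ i, HA i)
  obtain ⟨b, hbK, hbne⟩ := exists_ne_one_of_finiteIndex (⨅ i, HB i)
  have hkey : ∀ i, α i a = 1 ∨ β i b = 1 := by
    intro i
    by_cases h : (Set.range (α i)).Finite
    · left
      have ha' : a ∈ HA i := Subgroup.mem_iInf.mp haK i
      rw [hHA] at ha'
      simp only [if_pos h] at ha'
      exact ha'
    · right
      have hβf : (Set.range (β i)).Finite := (hsplit i).resolve_left h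
      have hb' : b ∈ HB i := Subgroup.mem_iInf.mp hbK i
      rw [hHB] at hb'
      simp only [if_pos hβf] at hb'
      exact hb'
  set w := Monoid.Coprod.inl a * Monoid.Coprod.inr b * (Monoid.Coprod.inl a)⁻¹ *
    (Monoid.Coprod.inr b)⁻¹ with hw
  have hφw : φ w = 1 := by
    rw [hw, _root_.map_mul, _root_.map_mul, _root_.map_mul, _root_.map_inv φ, _root_.map_inv φ]
    funext i
    show φ (Monoid.Coprod.inl a) i * φ (Monoid.Coprod.inr b) i * (φ (Monoid.Coprod.inl a) i)⁻¹ *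
      (φ (Monoid.Coprod.inr b) i)⁻¹ = 1
    have e1 : φ (Monoid.Coprod.inl a) i = α i a := rfl
    have e2 : φ (Monoid.Coprod.inr b) i = β i b := rfl
    rw [e1, e2]
    rcases hkey i with h | h <;> simp [h]
  have hw1 : w = 1 := hφ (by rw [hφw, _root_.map_one])
  exact coprod_comm_ne_one hane hbne hw1
end
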